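/- There is a universal constant C such that for every AND-OR formula φ (with AND and OR gates of arbitrary fan-in), there exists an AND-OR formula φ' computing the same boolean function on the same variables, having the same size (number of leaves), in which every gate has fan-in at most two, and satisfying σ_-(φ') ≤ C · σ_-(φ). -/

import Mathlib

noncomputable section

/-- An AND-OR formula: a rooted tree whose internal vertices are AND or OR gates of
arbitrary fan-in and whose leaves are distinct input variables. -/
inductive AOF : Type where
  | leaf : AOF
  | and : (k : ℕ) → (Fin k → AOF) → AOF
  | or : (k : ℕ) → (Fin k → AOF) → AOF

namespace AOF

/-- The set of leaves (input variables). -/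
def Leaf : AOF → Type
  | leaf => Unit
  | and k c => Σ j : Fin k, (c j).Leaf
  | or k c => Σ j : Fin k, (c j).Leaf

/-- The size (number of leaves). -/
def size : AOF → ℕ
  | leaf => 1
  | and k c => ∑ j : Fin k, (c j).size
  | or k c => ∑ j : Fin k, (c j).size

/-- The read-once boolean function computed by the formula. -/
def eval : ∀ φ : AOF, (φ.Leaf → Bool) → Bool
  | leaf, x => x ()
  | and k c, x => decide (∀ j : Fin k, (c j).eval (fun i => x ⟨j, i⟩) = true)
  | or k c, x => decide (∃ j : Fin k, (c j).eval (fun i => x ⟨j, i⟩) = true)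

/-- Every gate has fan-in at most two. -/
def FanInLeTwo : AOF → Prop
  | leaf => True
  | and k c => k ≤ 2 ∧ ∀ j, (c j).FanInLeTwo
  | or k c => k ≤ 2 ∧ ∀ j, (c j).FanInLeTwo

/-- `σ_-(φ)`: the maximum over simple paths `ξ` from the root down to a leaf of
`Σ_{w ∈ ξ} 1/√(s_w)` (using that the adversary bound of a size-`s` AND-OR formula
is `√s`). -/
def sigmaMinus : AOF → ℝ
  | leaf => 1
  | and k c => 1 / Real.sqrt ((AOF.and k c).size) + ⨆ j : Fin k, (c j).sigmaMinus
  | or k c => 1 / Real.sqrt ((AOF.or k c).size) + ⨆ j : Fin k, (c j).sigmaMinus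

end AOF

namespace Gate17

open AOF

instance : Inhabited AOF := ⟨.leaf⟩

/-! ### square-root helpers -/

/-- `1/√n`. -/
def rs (n : ℕ) : ℝ := 1 / Real.sqrt n

lemma rs_nonneg (n : ℕ) : 0 ≤ rs n := by
  unfold rs; positivity

lemma rs_zero : rs 0 = 0 := by simp [rs]

lemma rs_one : rs 1 = 1 := by simp [rs]

lemma rs_le_one (n : ℕ) : rs n ≤ 1 := by
  rcases Nat.eq_zero_or_pos n with h | h
  · simp [h, rs_zero]
  · unfold rs
    rw [div_le_one (by positivity)]
    have : (1:ℝ) ≤ (n:ℝ) := by exact_mod_cast h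
    nlinarith [Real.sq_sqrt (by linarith : (0:ℝ) ≤ (n:ℝ)), Real.sqrt_nonneg (n:ℝ)]

lemma rs_ratio {p q a b : ℕ} (ha : 1 ≤ a) (h : q * q * a ≤ p * p * b) :
    (q : ℝ) * rs b ≤ (p : ℝ) * rs a := by
  rcases Nat.eq_zero_or_pos b with hb | hb
  · subst hb
    have hq : q = 0 := by nlinarith
    subst hq
    simp [rs_zero]
    exact mul_nonneg (by positivity) (rs_nonneg a)
  · have hsa : (0:ℝ) < Real.sqrt a := Real.sqrt_pos.2 (by exact_mod_cast ha)
    have hsb : (0:ℝ) < Real.sqrt b := Real.sqrt_pos.2 (by exact_mod_cast hb)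
    unfold rs
    rw [mul_one_div, mul_one_div, div_le_div_iff₀ hsb hsa]
    have key : ((q:ℝ) * Real.sqrt a) ^ 2 ≤ ((p:ℝ) * Real.sqrt b) ^ 2 := by
      have h1 : Real.sqrt a ^ 2 = (a:ℝ) := Real.sq_sqrt (by positivity)
      have h2 : Real.sqrt b ^ 2 = (b:ℝ) := Real.sq_sqrt (by positivity)
      have : ((q:ℝ) * (q:ℝ)) * a ≤ ((p:ℝ) * (p:ℝ)) * b := by exact_mod_cast h
      nlinarith
    have h1 : (0:ℝ) ≤ (q:ℝ) * Real.sqrt a := by positivity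
    have h2 : (0:ℝ) ≤ (p:ℝ) * Real.sqrt b := by positivity
    nlinarith

lemma rs_anti {m n : ℕ} (hm : 1 ≤ m) (h : m ≤ n) : rs n ≤ rs m := by
  have := rs_ratio (p := 1) (q := 1) hm (by simpa using h)
  simpa using this

/-- sup over `Fin 2`. -/
lemma ciSup_fin2 (f : Fin 2 → ℝ) : (⨆ j, f j) = max (f 0) (f 1) := by
  apply le_antisymm
  · refine ciSup_le fun j => ?_
    rcases j with ⟨j, hj⟩
    interval_cases j
    · exact le_max_left _ _
    · exact le_max_right _ _
  · refine max_le ?_ ?_ <;>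
      exact le_ciSup (Set.Finite.bddAbove (Set.finite_range f)) _

/-! ### basic facts about `sigmaMinus` -/

lemma sigma_nonneg (φ : AOF) : 0 ≤ φ.sigmaMinus := by
  induction φ with
  | leaf => norm_num [sigmaMinus]
  | and k c ih =>
      have : 0 ≤ ⨆ j : Fin k, (c j).sigmaMinus := Real.iSup_nonneg ih
      have h0 : 0 ≤ 1 / Real.sqrt ((AOF.and k c).size) := by positivity
      rw [sigmaMinus]; linarith
  | or k c ih =>
      have : 0 ≤ ⨆ j : Fin k, (c j).sigmaMinus := Real.iSup_nonneg ih
      have h0 : 0 ≤ 1 / Real.sqrt ((AOF.or k c).size) := by positivity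
      rw [sigmaMinus]; linarith

lemma sigma_zero (φ : AOF) (h : φ.size = 0) : φ.sigmaMinus = 0 := by
  induction φ with
  | leaf => simp [size] at h
  | and k c ih =>
      have h' : ∑ j : Fin k, (c j).size = 0 := h
      have hc : ∀ j, (c j).size = 0 := fun j =>
        Finset.sum_eq_zero_iff.1 h' j (Finset.mem_univ j)
      rw [sigmaMinus, h]
      have : (⨆ j : Fin k, (c j).sigmaMinus) = 0 := by
        apply le_antisymm
        · rcases Nat.eq_zero_or_pos k with hk | hk
          · subst hk; exact le_of_eq (Real.iSup_of_isEmpty _)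
          · haveI : Nonempty (Fin k) := ⟨⟨0, hk⟩⟩
            exact ciSup_le fun j => le_of_eq (ih j (hc j))
        · exact Real.iSup_nonneg fun j => sigma_nonneg _
      rw [this]; simp
  | or k c ih =>
      have h' : ∑ j : Fin k, (c j).size = 0 := h
      have hc : ∀ j, (c j).size = 0 := fun j =>
        Finset.sum_eq_zero_iff.1 h' j (Finset.mem_univ j)
      rw [sigmaMinus, h]
      have : (⨆ j : Fin k, (c j).sigmaMinus) = 0 := by
        apply le_antisymm
        · rcases Nat.eq_zero_or_pos k with hk | hk
          · subst hk; exact le_of_eq (Real.iSup_of_isEmpty _)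
          · haveI : Nonempty (Fin k) := ⟨⟨0, hk⟩⟩
            exact ciSup_le fun j => le_of_eq (ih j (hc j))
        · exact Real.iSup_nonneg fun j => sigma_nonneg _
      rw [this]; simp

lemma one_le_sigma (φ : AOF) (h : 1 ≤ φ.size) : 1 ≤ φ.sigmaMinus := by
  induction φ with
  | leaf => simp [sigmaMinus]
  | and k c ih =>
      have : ∃ j : Fin k, 1 ≤ (c j).size := by
        by_contra hc
        push_neg at hc
        have hz : ∀ j : Fin k, (c j).size = 0 := fun j => by have := hc j; omega
        have h' : (AOF.and k c).size = ∑ j : Fin k, (c j).size := rfl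
        rw [h', Finset.sum_eq_zero (fun j _ => hz j)] at h
        omega
      obtain ⟨j, hj⟩ := this
      have h1 : 1 ≤ (c j).sigmaMinus := ih j hj
      have h2 : (c j).sigmaMinus ≤ ⨆ j : Fin k, (c j).sigmaMinus :=
        le_ciSup (f := fun j : Fin k => (c j).sigmaMinus)
          (Set.Finite.bddAbove (Set.finite_range _)) j
      have h0 : 0 ≤ 1 / Real.sqrt ((AOF.and k c).size) := by positivity
      rw [sigmaMinus]; linarith
  | or k c ih =>
      have : ∃ j : Fin k, 1 ≤ (c j).size := by
        by_contra hc
        push_neg at hc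
        have hz : ∀ j : Fin k, (c j).size = 0 := fun j => by have := hc j; omega
        have h' : (AOF.or k c).size = ∑ j : Fin k, (c j).size := rfl
        rw [h', Finset.sum_eq_zero (fun j _ => hz j)] at h
        omega
      obtain ⟨j, hj⟩ := this
      have h1 : 1 ≤ (c j).sigmaMinus := ih j hj
      have h2 : (c j).sigmaMinus ≤ ⨆ j : Fin k, (c j).sigmaMinus :=
        le_ciSup (f := fun j : Fin k => (c j).sigmaMinus)
          (Set.Finite.bddAbove (Set.finite_range _)) j
      have h0 : 0 ≤ 1 / Real.sqrt ((AOF.or k c).size) := by positivity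
      rw [sigmaMinus]; linarith

/-! ### gates -/

def gate (g : Bool) (k : ℕ) (c : Fin k → AOF) : AOF := if g then .and k c else .or k c

def gpair (a b : AOF) : Fin 2 → AOF := fun j => if j.1 = 0 then a else b

def g2 (g : Bool) (a b : AOF) : AOF := gate g 2 (gpair a b)

def gateL (g : Bool) (l : List AOF) : AOF := gate g l.length l.get

def wt (l : List AOF) : ℕ := (l.map AOF.size).sum

@[simp] lemma gpair_zero (a b : AOF) (h : (0:ℕ) < 2) : gpair a b ⟨0, h⟩ = a := rfl
@[simp] lemma gpair_one (a b : AOF) (h : (1:ℕ) < 2) : gpair a b ⟨1, h⟩ = b := rfl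

lemma size_gate (g : Bool) (k : ℕ) (c : Fin k → AOF) :
    (gate g k c).size = ∑ j : Fin k, (c j).size := by cases g <;> rfl

lemma sigma_gate (g : Bool) (k : ℕ) (c : Fin k → AOF) :
    (gate g k c).sigmaMinus = rs (gate g k c).size + ⨆ j : Fin k, (c j).sigmaMinus := by
  cases g <;> rfl

lemma fanin_gate (g : Bool) {k : ℕ} {c : Fin k → AOF} (hk : k ≤ 2)
    (h : ∀ j, (c j).FanInLeTwo) : (gate g k c).FanInLeTwo := by
  cases g <;> exact ⟨hk, h⟩

lemma size_g2 (g : Bool) (a b : AOF) : (g2 g a b).size = a.size + b.size := by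
  rw [g2, size_gate, Fin.sum_univ_two]
  rfl

lemma sigma_g2 (g : Bool) (a b : AOF) :
    (g2 g a b).sigmaMinus
      = rs (a.size + b.size) + max a.sigmaMinus b.sigmaMinus := by
  rw [g2, sigma_gate, size_gate, Fin.sum_univ_two, ciSup_fin2]
  rfl

lemma fanin_g2 (g : Bool) {a b : AOF} (ha : a.FanInLeTwo) (hb : b.FanInLeTwo) :
    (g2 g a b).FanInLeTwo := by
  refine fanin_gate g (by omega) ?_
  rintro ⟨j, hj⟩
  interval_cases j
  · exact ha
  · exact hb

lemma getD_eq_get' (l : List AOF) (d : AOF) {n : ℕ} (h : n < l.length) :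
    l.getD n d = l.get ⟨n, h⟩ := List.getD_eq_getElem l d h

lemma drop_eq_get_cons' {l : List AOF} {n : ℕ} (h : n < l.length) :
    l.drop n = l.get ⟨n, h⟩ :: l.drop (n + 1) := List.drop_eq_getElem_cons h

/-! ### weight lemmas -/

lemma wt_take_drop (l : List AOF) (n : ℕ) : wt (l.take n) + wt (l.drop n) = wt l := by
  unfold wt
  rw [List.map_take, List.map_drop, List.sum_take_add_sum_drop]

lemma wt_cons (a : AOF) (l : List AOF) : wt (a :: l) = a.size + wt l := by simp [wt]

lemma size_le_wt {t : AOF} {l : List AOF} (h : t ∈ l) : t.size ≤ wt l := by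
  unfold wt
  exact List.single_le_sum (by simp) _ (List.mem_map_of_mem (f := AOF.size) h)

lemma wt_drop_cons {l : List AOF} {p : ℕ} (h : p < l.length) :
    wt (l.drop p) = (l.get ⟨p, h⟩).size + wt (l.drop (p + 1)) := by
  rw [drop_eq_get_cons' h, wt_cons]

lemma wt_split {l : List AOF} {p : ℕ} (h : p < l.length) :
    wt l = wt (l.take p) + (l.get ⟨p, h⟩).size + wt (l.drop (p + 1)) := by
  have := wt_take_drop l p
  rw [wt_drop_cons h] at this
  omega

lemma wt_take_succ {l : List AOF} {n : ℕ} (h : n < l.length) :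
    wt (l.take (n + 1)) = wt (l.take n) + (l.get ⟨n, h⟩).size := by
  have h1 := wt_take_drop l n
  have h2 := wt_take_drop l (n + 1)
  have h3 := wt_drop_cons h
  omega

lemma exists_lightcut (l : List AOF) (h2 : 2 ≤ l.length)
    (hh : ¬ ∃ p, p < l.length ∧ wt l ≤ 3 * (l.getD p .leaf).size) :
    ∃ n, 1 ≤ n ∧ n < l.length ∧ wt l ≤ 3 * wt (l.take n) := by
  push_neg at hh
  have hlast : l.length - 1 < l.length := by omega
  have hl := hh (l.length - 1) hlast
  rw [getD_eq_get' _ _ hlast] at hl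
  refine ⟨l.length - 1, by omega, by omega, ?_⟩
  have h1 := wt_take_drop l (l.length - 1)
  have h3 := wt_drop_cons hlast
  have h4 : l.drop (l.length - 1 + 1) = [] := by
    apply List.drop_eq_nil_of_le; omega
  rw [h4] at h3
  have h5 : wt ([] : List AOF) = 0 := rfl
  simp only [List.get_eq_getElem] at h3 hl
  omega

/-! ### the binary-tree builder -/

def mkTree (g : Bool) (l : List AOF) : AOF :=
  if h2 : 2 ≤ l.length then
    if hh : ∃ p, p < l.length ∧ wt l ≤ 3 * (l.getD p .leaf).size then
      if hp0 : Nat.find hh = 0 then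
        g2 g (l.getD 0 .leaf) (mkTree g (l.drop 1))
      else if hpl : Nat.find hh + 1 = l.length then
        g2 g (mkTree g (l.take (Nat.find hh))) (l.getD (Nat.find hh) .leaf)
      else
        g2 g (mkTree g (l.take (Nat.find hh)))
             (g2 g (l.getD (Nat.find hh) .leaf) (mkTree g (l.drop (Nat.find hh + 1))))
    else
      g2 g (mkTree g (l.take (Nat.find (exists_lightcut l h2 hh))))
           (mkTree g (l.drop (Nat.find (exists_lightcut l h2 hh))))
  else if l.length = 1 then l.getD 0 .leaf else gateL g []
termination_by l.length
decreasing_by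
  all_goals simp only [List.length_take, List.length_drop]
  all_goals try omega
  all_goals try (have := (Nat.find_spec hh).1; omega)
  all_goals try (have := (Nat.find_spec (exists_lightcut l h2 hh)).2.1; omega)
  all_goals try (have := (Nat.find_spec (exists_lightcut l h2 hh)).1; omega)

theorem size_mkTree (g : Bool) (l : List AOF) : (mkTree g l).size = wt l := by
  rw [mkTree]
  split_ifs with h2 hh hp0 hpl hl1
  · -- heavy at 0
    have h0 : 0 < l.length := by omega
    rw [size_g2, size_mkTree g (l.drop 1)]
    have hws := wt_split (l := l) (p := 0) h0
    have hD : l.getD 0 .leaf = l.get ⟨0, h0⟩ := getD_eq_get' _ _ h0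
    rw [hD]
    have ht0 : wt (l.take 0) = 0 := rfl
    rw [show (0:ℕ)+1 = 1 from rfl] at hws
    omega
  · -- heavy at end
    have hp := (Nat.find_spec hh).1
    rw [size_g2, size_mkTree g (l.take (Nat.find hh))]
    have := wt_split (l := l) hp
    have hD : l.getD (Nat.find hh) .leaf = l.get ⟨Nat.find hh, hp⟩ := getD_eq_get' _ _ hp
    have h4 : l.drop (Nat.find hh + 1) = [] := by
      apply List.drop_eq_nil_of_le; omega
    rw [h4] at this
    have h5 : wt ([] : List AOF) = 0 := rfl
    rw [hD]
    omega
  · -- heavy middle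
    have hp := (Nat.find_spec hh).1
    rw [size_g2, size_g2, size_mkTree g (l.take (Nat.find hh)),
      size_mkTree g (l.drop (Nat.find hh + 1))]
    have := wt_split (l := l) hp
    have hD : l.getD (Nat.find hh) .leaf = l.get ⟨Nat.find hh, hp⟩ := getD_eq_get' _ _ hp
    rw [hD]
    omega
  · -- light
    rw [size_g2, size_mkTree g (l.take (Nat.find (exists_lightcut l h2 hh))),
      size_mkTree g (l.drop (Nat.find (exists_lightcut l h2 hh)))]
    exact wt_take_drop _ _
  · -- singleton
    obtain ⟨t, ht⟩ := List.length_eq_one_iff.1 hl1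
    subst ht
    simp [wt]
  · -- empty
    have hnil : l = [] := List.length_eq_zero_iff.1 (by omega)
    subst hnil
    simp [gateL, size_gate, wt]
termination_by l.length
decreasing_by
  all_goals simp only [List.length_take, List.length_drop]
  all_goals try omega
  all_goals try (have := (Nat.find_spec hh).1; omega)
  all_goals try (have := (Nat.find_spec (exists_lightcut l h2 hh)).2.1; omega)
  all_goals try (have := (Nat.find_spec (exists_lightcut l h2 hh)).1; omega)

theorem fanin_mkTree (g : Bool) (l : List AOF) (h : ∀ t ∈ l, t.FanInLeTwo) :
    (mkTree g l).FanInLeTwo := by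
  rw [mkTree]
  split_ifs with h2 hh hp0 hpl hl1
  · have h0 : 0 < l.length := by omega
    refine fanin_g2 g ?_ (fanin_mkTree g _ fun t ht => h t (List.drop_subset _ _ ht))
    rw [getD_eq_get' _ _ h0]
    exact h _ (List.get_mem _ _)
  · have hp := (Nat.find_spec hh).1
    refine fanin_g2 g (fanin_mkTree g _ fun t ht => h t (List.take_subset _ _ ht)) ?_
    rw [getD_eq_get' _ _ hp]
    exact h _ (List.get_mem _ _)
  · have hp := (Nat.find_spec hh).1
    refine fanin_g2 g (fanin_mkTree g _ fun t ht => h t (List.take_subset _ _ ht)) ?_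
    refine fanin_g2 g ?_ (fanin_mkTree g _ fun t ht => h t (List.drop_subset _ _ ht))
    rw [getD_eq_get' _ _ hp]
    exact h _ (List.get_mem _ _)
  · exact fanin_g2 g (fanin_mkTree g _ fun t ht => h t (List.take_subset _ _ ht))
      (fanin_mkTree g _ fun t ht => h t (List.drop_subset _ _ ht))
  · obtain ⟨t, ht⟩ := List.length_eq_one_iff.1 hl1
    subst ht
    exact h t (by simp)
  · exact fanin_gate g (by simp) (fun j => j.elim0)
termination_by l.length
decreasing_by
  all_goals simp only [List.length_take, List.length_drop]
  all_goals try omega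
  all_goals try (have := (Nat.find_spec hh).1; omega)
  all_goals try (have := (Nat.find_spec (exists_lightcut l h2 hh)).2.1; omega)
  all_goals try (have := (Nat.find_spec (exists_lightcut l h2 hh)).1; omega)

/-! ### numeric helpers for the geometric decay -/

lemma ratio_3130 {S W : ℕ} (h : 3*W ≤ 2*S) (hw : 1 ≤ W) : 31 * rs S ≤ 30 * rs W := by
  have := rs_ratio (p := 30) (q := 31) (a := W) (b := S) hw (by omega)
  exact_mod_cast this

lemma ratio_3129 {S W : ℕ} (h : 3*W ≤ 2*S) (hw : 1 ≤ W) : 31 * rs S ≤ 29 * rs W := by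
  have := rs_ratio (p := 29) (q := 31) (a := W) (b := S) hw (by omega)
  exact_mod_cast this

lemma rs_le_rs_max {s S : ℕ} (h : s ≤ S) : rs S ≤ rs (max s 1) := by
  rcases Nat.eq_zero_or_pos s with h0 | h1
  · subst h0
    simpa [rs_one] using rs_le_one S
  · rw [Nat.max_eq_left h1]
    exact rs_anti h1 h

lemma ratio_3132 {s S : ℕ} (h : s ≤ S) : 31 * rs S ≤ 32 * rs (max s 1) := by
  rcases Nat.eq_zero_or_pos s with h0 | h1
  · subst h0
    have := rs_le_one S
    have := rs_nonneg S
    simp only [Nat.max_eq_right (by omega : (0:ℕ) ≤ 1), rs_one]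
    linarith
  · rw [Nat.max_eq_left h1]
    have := rs_ratio (p := 32) (q := 31) (a := s) (b := S) h1 (by omega)
    exact_mod_cast this

lemma ne_nil_len {l : List AOF} (h : 0 < l.length) : l ≠ [] :=
  List.length_pos_iff.1 h

/-! ### the σ bound for `mkTree` -/

theorem sigma_mkTree (g : Bool) (l : List AOF) (hl : l ≠ []) :
    ∃ t ∈ l, (mkTree g l).sigmaMinus ≤
      t.sigmaMinus + 32 * rs (max t.size 1) - 30 * rs (wt l) := by
  rw [mkTree]
  split_ifs with h2 hh hp0 hpl hl1
  · -- heavy at position 0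
    have h0 : 0 < l.length := by omega
    have hspec := Nat.find_spec hh
    rw [hp0] at hspec
    rw [getD_eq_get' _ _ h0] at hspec ⊢
    have hws := wt_split (l := l) (p := 0) h0
    rw [show (0:ℕ)+1 = 1 from rfl] at hws
    have ht0 : wt (l.take 0) = 0 := rfl
    have hS : (l.get ⟨0, h0⟩).size + wt (l.drop 1) = wt l := by omega
    have hd1 : 0 < (l.drop 1).length := by simp only [List.length_drop]; omega
    rcases le_total (mkTree g (l.drop 1)).sigmaMinus (l.get ⟨0, h0⟩).sigmaMinus
      with hbr | hbr
    · refine ⟨l.get ⟨0, h0⟩, List.get_mem _ _, ?_⟩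
      rw [sigma_g2, size_mkTree, hS, max_eq_left hbr]
      have := ratio_3132 (s := (l.get ⟨0, h0⟩).size) (S := wt l)
        (size_le_wt (List.get_mem _ _))
      linarith
    · have h3W : 3 * wt (l.drop 1) ≤ 2 * wt l := by omega
      rcases Nat.eq_zero_or_pos (wt (l.drop 1)) with hw0 | hw1
      · obtain ⟨t, htm⟩ := List.exists_mem_of_length_pos hd1
        refine ⟨t, List.drop_subset _ _ htm, ?_⟩
        have hsR : (mkTree g (l.drop 1)).sigmaMinus = 0 :=
          sigma_zero _ (by rw [size_mkTree]; exact hw0)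
        rw [sigma_g2, size_mkTree, hS, max_eq_right hbr, hsR]
        have hts : t.size = 0 := by have := size_le_wt htm; omega
        rw [hts]
        simp only [Nat.max_eq_right (by omega : (0:ℕ) ≤ 1), rs_one]
        have := rs_le_one (wt l)
        have := rs_nonneg (wt l)
        have := sigma_nonneg t
        linarith
      · obtain ⟨t, htm, hle⟩ := sigma_mkTree g (l.drop 1) (ne_nil_len hd1)
        refine ⟨t, List.drop_subset _ _ htm, ?_⟩
        rw [sigma_g2, size_mkTree, hS, max_eq_right hbr]
        have h31 := ratio_3130 h3W hw1
        linarith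
  · -- heavy at the last position
    have hspec := Nat.find_spec hh
    have hp := hspec.1
    rw [getD_eq_get' _ _ hp] at hspec ⊢
    have hws := wt_split (l := l) hp
    have h4 : l.drop (Nat.find hh + 1) = [] := by
      apply List.drop_eq_nil_of_le; omega
    rw [h4] at hws
    have h5 : wt ([] : List AOF) = 0 := rfl
    have hS : wt (l.take (Nat.find hh)) + (l.get ⟨Nat.find hh, hp⟩).size = wt l := by omega
    have hdL : 0 < (l.take (Nat.find hh)).length := by
      simp only [List.length_take]; omega
    rcases le_total (l.get ⟨Nat.find hh, hp⟩).sigmaMinus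
      (mkTree g (l.take (Nat.find hh))).sigmaMinus with hbr | hbr
    · -- left branch
      have h3W : 3 * wt (l.take (Nat.find hh)) ≤ 2 * wt l := by omega
      rcases Nat.eq_zero_or_pos (wt (l.take (Nat.find hh))) with hw0 | hw1
      · obtain ⟨t, htm⟩ := List.exists_mem_of_length_pos hdL
        refine ⟨t, List.take_subset _ _ htm, ?_⟩
        have hsL : (mkTree g (l.take (Nat.find hh))).sigmaMinus = 0 :=
          sigma_zero _ (by rw [size_mkTree]; exact hw0)
        rw [sigma_g2, size_mkTree, hS, max_eq_left hbr, hsL]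
        have hts : t.size = 0 := by have := size_le_wt htm; omega
        rw [hts]
        simp only [Nat.max_eq_right (by omega : (0:ℕ) ≤ 1), rs_one]
        have := rs_le_one (wt l)
        have := rs_nonneg (wt l)
        have := sigma_nonneg t
        linarith
      · obtain ⟨t, htm, hle⟩ := sigma_mkTree g (l.take (Nat.find hh)) (ne_nil_len hdL)
        refine ⟨t, List.take_subset _ _ htm, ?_⟩
        rw [sigma_g2, size_mkTree, hS, max_eq_left hbr]
        have h31 := ratio_3130 h3W hw1
        linarith
    · -- the heavy child itself
      refine ⟨l.get ⟨Nat.find hh, hp⟩, List.get_mem _ _, ?_⟩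
      rw [sigma_g2, size_mkTree, hS, max_eq_right hbr]
      have := ratio_3132 (s := (l.get ⟨Nat.find hh, hp⟩).size) (S := wt l)
        (size_le_wt (List.get_mem _ _))
      linarith
  · -- heavy in the middle
    have hspec := Nat.find_spec hh
    have hp := hspec.1
    rw [getD_eq_get' _ _ hp] at hspec ⊢
    have hws := wt_split (l := l) hp
    have hdL : 0 < (l.take (Nat.find hh)).length := by
      simp only [List.length_take]; omega
    have hdR : 0 < (l.drop (Nat.find hh + 1)).length := by
      simp only [List.length_drop]; omega
    have h3WL : 3 * wt (l.take (Nat.find hh)) ≤ 2 * wt l := by omega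
    have h3WR : 3 * wt (l.drop (Nat.find hh + 1)) ≤ 2 * wt l := by omega
    -- the inner gate
    set tp := l.get ⟨Nat.find hh, hp⟩ with htp
    have hSin : tp.size + (mkTree g (l.drop (Nat.find hh + 1))).size
        = tp.size + wt (l.drop (Nat.find hh + 1)) := by rw [size_mkTree]
    have hSout : (mkTree g (l.take (Nat.find hh))).size
          + (g2 g tp (mkTree g (l.drop (Nat.find hh + 1)))).size = wt l := by
      rw [size_g2, size_mkTree, size_mkTree]; omega
    rw [sigma_g2, hSout, sigma_g2, size_mkTree]
    set WI := tp.size + wt (l.drop (Nat.find hh + 1)) with hWI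
    rcases le_total (rs WI + max tp.sigmaMinus (mkTree g (l.drop (Nat.find hh + 1))).sigmaMinus)
      (mkTree g (l.take (Nat.find hh))).sigmaMinus with hbr | hbr
    · -- left branch
      rw [max_eq_left hbr]
      rcases Nat.eq_zero_or_pos (wt (l.take (Nat.find hh))) with hw0 | hw1
      · obtain ⟨t, htm⟩ := List.exists_mem_of_length_pos hdL
        refine ⟨t, List.take_subset _ _ htm, ?_⟩
        have hsL : (mkTree g (l.take (Nat.find hh))).sigmaMinus = 0 :=
          sigma_zero _ (by rw [size_mkTree]; exact hw0)
        rw [hsL]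
        have hts : t.size = 0 := by have := size_le_wt htm; omega
        rw [hts]
        simp only [Nat.max_eq_right (by omega : (0:ℕ) ≤ 1), rs_one]
        have := rs_le_one (wt l)
        have := rs_nonneg (wt l)
        have := sigma_nonneg t
        linarith
      · obtain ⟨t, htm, hle⟩ := sigma_mkTree g (l.take (Nat.find hh)) (ne_nil_len hdL)
        refine ⟨t, List.take_subset _ _ htm, ?_⟩
        have h31 := ratio_3130 h3WL hw1
        linarith
    · rw [max_eq_right hbr]
      rcases le_total (mkTree g (l.drop (Nat.find hh + 1))).sigmaMinus tp.sigmaMinus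
        with hbr2 | hbr2
      · -- the heavy child
        refine ⟨tp, List.get_mem _ _, ?_⟩
        rw [max_eq_left hbr2]
        have hA := rs_le_rs_max (s := tp.size) (S := wt l) (by omega)
        have hB := rs_le_rs_max (s := tp.size) (S := WI) (by omega)
        linarith
      · -- right branch
        rw [max_eq_right hbr2]
        rcases Nat.eq_zero_or_pos (wt (l.drop (Nat.find hh + 1))) with hw0 | hw1
        · obtain ⟨t, htm⟩ := List.exists_mem_of_length_pos hdR
          refine ⟨t, List.drop_subset _ _ htm, ?_⟩
          have hsR : (mkTree g (l.drop (Nat.find hh + 1))).sigmaMinus = 0 :=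
            sigma_zero _ (by rw [size_mkTree]; exact hw0)
          rw [hsR]
          have hts : t.size = 0 := by have := size_le_wt htm; omega
          rw [hts]
          simp only [Nat.max_eq_right (by omega : (0:ℕ) ≤ 1), rs_one]
          have := rs_le_one (wt l)
          have := rs_le_one WI
          have := rs_nonneg (wt l)
          have := sigma_nonneg t
          linarith
        · obtain ⟨t, htm, hle⟩ :=
            sigma_mkTree g (l.drop (Nat.find hh + 1)) (ne_nil_len hdR)
          refine ⟨t, List.drop_subset _ _ htm, ?_⟩
          have h31 := ratio_3129 h3WR hw1
          have hWIR : rs WI ≤ rs (wt (l.drop (Nat.find hh + 1))) :=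
            rs_anti hw1 (by omega)
          linarith
  · -- light case
    have hspec := Nat.find_spec (exists_lightcut l h2 hh)
    obtain ⟨hn1, hnl, hncut⟩ := hspec
    have hh' := hh
    push_neg at hh'
    have hws := wt_take_drop l (Nat.find (exists_lightcut l h2 hh))
    set n := Nat.find (exists_lightcut l h2 hh) with hn
    have h3WR : 3 * wt (l.drop n) ≤ 2 * wt l := by omega
    have h3WL : 3 * wt (l.take n) ≤ 2 * wt l := by
      have hnm : n - 1 < l.length := by omega
      have hlight := hh' (n - 1) hnm
      rw [getD_eq_get' _ _ hnm] at hlight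
      have hts : wt (l.take (n - 1 + 1)) = wt (l.take (n - 1)) + (l.get ⟨n - 1, hnm⟩).size :=
        wt_take_succ hnm
      rw [show n - 1 + 1 = n by omega] at hts
      rcases Nat.lt_or_ge 1 n with hn2 | hn2
      · -- n ≥ 2 : use minimality at n-1
        have hmin := Nat.find_min (exists_lightcut l h2 hh) (show n - 1 < n by omega)
        push_neg at hmin
        have := hmin (by omega) (by omega)
        omega
      · -- n = 1
        have hz : wt (l.take (n - 1)) = 0 := by
          rw [show n - 1 = 0 by omega]; rfl
        omega
    have hdL : 0 < (l.take n).length := by simp only [List.length_take]; omega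
    have hdR : 0 < (l.drop n).length := by simp only [List.length_drop]; omega
    rw [sigma_g2, size_mkTree, size_mkTree, hws]
    rcases le_total (mkTree g (l.drop n)).sigmaMinus (mkTree g (l.take n)).sigmaMinus
      with hbr | hbr
    · rw [max_eq_left hbr]
      rcases Nat.eq_zero_or_pos (wt (l.take n)) with hw0 | hw1
      · obtain ⟨t, htm⟩ := List.exists_mem_of_length_pos hdL
        refine ⟨t, List.take_subset _ _ htm, ?_⟩
        have hsL : (mkTree g (l.take n)).sigmaMinus = 0 :=
          sigma_zero _ (by rw [size_mkTree]; exact hw0)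
        rw [hsL]
        have hts : t.size = 0 := by have := size_le_wt htm; omega
        rw [hts]
        simp only [Nat.max_eq_right (by omega : (0:ℕ) ≤ 1), rs_one]
        have := rs_le_one (wt l)
        have := rs_nonneg (wt l)
        have := sigma_nonneg t
        linarith
      · obtain ⟨t, htm, hle⟩ := sigma_mkTree g (l.take n) (ne_nil_len hdL)
        refine ⟨t, List.take_subset _ _ htm, ?_⟩
        have h31 := ratio_3130 h3WL hw1
        linarith
    · rw [max_eq_right hbr]
      rcases Nat.eq_zero_or_pos (wt (l.drop n)) with hw0 | hw1
      · obtain ⟨t, htm⟩ := List.exists_mem_of_length_pos hdR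
        refine ⟨t, List.drop_subset _ _ htm, ?_⟩
        have hsR : (mkTree g (l.drop n)).sigmaMinus = 0 :=
          sigma_zero _ (by rw [size_mkTree]; exact hw0)
        rw [hsR]
        have hts : t.size = 0 := by have := size_le_wt htm; omega
        rw [hts]
        simp only [Nat.max_eq_right (by omega : (0:ℕ) ≤ 1), rs_one]
        have := rs_le_one (wt l)
        have := rs_nonneg (wt l)
        have := sigma_nonneg t
        linarith
      · obtain ⟨t, htm, hle⟩ := sigma_mkTree g (l.drop n) (ne_nil_len hdR)
        refine ⟨t, List.drop_subset _ _ htm, ?_⟩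
        have h31 := ratio_3130 h3WR hw1
        linarith
  · -- singleton
    obtain ⟨t, ht⟩ := List.length_eq_one_iff.1 hl1
    subst ht
    refine ⟨t, by simp, ?_⟩
    have hwt : wt [t] = t.size := by simp [wt]
    rw [hwt]
    show t.sigmaMinus ≤ _
    rcases Nat.eq_zero_or_pos t.size with h0 | h1
    · rw [h0, rs_zero]
      simp only [Nat.max_eq_right (by omega : (0:ℕ) ≤ 1), rs_one]
      linarith
    · rw [Nat.max_eq_left h1]
      have := rs_nonneg t.size
      linarith
  · exact absurd (List.length_eq_zero_iff.1 (by omega)) hl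
termination_by l.length
decreasing_by
  all_goals simp only [List.length_take, List.length_drop]
  all_goals try omega
  all_goals try (have := (Nat.find_spec hh).1; omega)
  all_goals try (have := (Nat.find_spec (exists_lightcut l h2 hh)).2.1; omega)
  all_goals try (have := (Nat.find_spec (exists_lightcut l h2 hh)).1; omega)

/-! ### leaf-set equivalences -/

def sigmaFin2 (F : Fin 2 → Type) :
    (Σ j, F j) ≃ (F ⟨0, by omega⟩ ⊕ F ⟨1, by omega⟩) where
  toFun x :=
    match x with
    | ⟨⟨0, _⟩, v⟩ => Sum.inl v
    | ⟨⟨1, _⟩, v⟩ => Sum.inr v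
  invFun x :=
    match x with
    | Sum.inl v => ⟨⟨0, by omega⟩, v⟩
    | Sum.inr v => ⟨⟨1, by omega⟩, v⟩
  left_inv := by
    rintro ⟨⟨(_ | _ | j), hj⟩, v⟩
    · rfl
    · rfl
    · exact absurd hj (by omega)
  right_inv := by rintro (v | v) <;> rfl

def sigmaFin1 (F : Fin 1 → Type) : F ⟨0, Nat.one_pos⟩ ≃ (Σ i, F i) where
  toFun v := ⟨⟨0, Nat.one_pos⟩, v⟩
  invFun x :=
    match x with
    | ⟨⟨0, _⟩, v⟩ => v
  left_inv := by intro v; rfl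
  right_inv := by rintro ⟨⟨(_ | j), hj⟩, v⟩
                  · rfl
                  · exact absurd hj (by omega)

def sigmaFinSucc (n : ℕ) (F : Fin (n + 1) → Type) :
    (Σ i, F i) ≃ (F ⟨0, Nat.succ_pos n⟩ ⊕ Σ i : Fin n, F i.succ) where
  toFun x :=
    match x with
    | ⟨⟨0, _⟩, v⟩ => Sum.inl v
    | ⟨⟨i + 1, h⟩, v⟩ => Sum.inr ⟨⟨i, by omega⟩, v⟩
  invFun x :=
    match x with
    | Sum.inl v => ⟨⟨0, Nat.succ_pos n⟩, v⟩
    | Sum.inr ⟨i, v⟩ => ⟨i.succ, v⟩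
  left_inv := by rintro ⟨⟨(_ | i), h⟩, v⟩ <;> rfl
  right_inv := by rintro (v | ⟨⟨i, h⟩, v⟩) <;> rfl

lemma forall_fin2' {P : Fin 2 → Prop} :
    (∀ j, P j) ↔ P ⟨0, by omega⟩ ∧ P ⟨1, by omega⟩ := by
  constructor
  · exact fun h => ⟨h _, h _⟩
  · rintro ⟨h0, h1⟩ ⟨(_ | _ | j), hj⟩
    · exact h0
    · exact h1
    · exact absurd hj (by omega)

lemma exists_fin2' {P : Fin 2 → Prop} :
    (∃ j, P j) ↔ P ⟨0, by omega⟩ ∨ P ⟨1, by omega⟩ := by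
  constructor
  · rintro ⟨⟨(_ | _ | j), hj⟩, h⟩
    · exact Or.inl h
    · exact Or.inr h
    · exact absurd hj (by omega)
  · rintro (h | h)
    · exact ⟨_, h⟩
    · exact ⟨_, h⟩

lemma forall_fin1' {P : Fin 1 → Prop} : (∀ j, P j) ↔ P ⟨0, Nat.one_pos⟩ := by
  constructor
  · exact fun h => h _
  · rintro h ⟨(_ | j), hj⟩
    · exact h
    · exact absurd hj (by omega)

lemma exists_fin1' {P : Fin 1 → Prop} : (∃ j, P j) ↔ P ⟨0, Nat.one_pos⟩ := by
  constructor
  · rintro ⟨⟨(_ | j), hj⟩, h⟩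
    · exact h
    · exact absurd hj (by omega)
  · exact fun h => ⟨_, h⟩

lemma forall_fin_succ' {n : ℕ} {P : Fin (n + 1) → Prop} :
    (∀ i, P i) ↔ P ⟨0, Nat.succ_pos n⟩ ∧ ∀ i : Fin n, P i.succ := by
  constructor
  · exact fun h => ⟨h _, fun i => h _⟩
  · rintro ⟨h0, hs⟩ ⟨(_ | i), hi⟩
    · exact h0
    · exact hs ⟨i, by omega⟩

lemma exists_fin_succ' {n : ℕ} {P : Fin (n + 1) → Prop} :
    (∃ i, P i) ↔ P ⟨0, Nat.succ_pos n⟩ ∨ ∃ i : Fin n, P i.succ := by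
  constructor
  · rintro ⟨⟨(_ | i), hi⟩, h⟩
    · exact Or.inl h
    · exact Or.inr ⟨⟨i, by omega⟩, h⟩
  · rintro (h | ⟨i, h⟩)
    · exact ⟨_, h⟩
    · exact ⟨_, h⟩

/-! ### equivalence of formulas -/

def EquivA (φ' φ : AOF) : Prop :=
  ∃ e : φ'.Leaf ≃ φ.Leaf, ∀ x : φ.Leaf → Bool, φ'.eval (fun i => x (e i)) = φ.eval x

lemma equivA_refl (φ : AOF) : EquivA φ φ := ⟨Equiv.refl _, fun _ => rfl⟩

lemma equivA_of_eq {a b : AOF} (h : a = b) : EquivA a b := h ▸ equivA_refl a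

lemma equivA_symm {a b : AOF} : EquivA a b → EquivA b a := by
  rintro ⟨e, he⟩
  refine ⟨e.symm, fun x => ?_⟩
  have h := he fun i => x (e.symm i)
  simp only [Equiv.symm_apply_apply] at h
  exact h.symm

lemma equivA_trans {a b c : AOF} : EquivA a b → EquivA b c → EquivA a c := by
  rintro ⟨e1, h1⟩ ⟨e2, h2⟩
  refine ⟨e1.trans e2, fun x => ?_⟩
  simp only [Equiv.trans_apply]
  rw [h1 fun j => x (e2 j), h2 x]

/-! ### eval of binary gates -/

lemma eval_g2_and (a b : AOF) (x : (g2 true a b).Leaf → Bool) :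
    (g2 true a b).eval x
      = ((a.eval fun v => x ⟨⟨0, by omega⟩, v⟩) &&
         (b.eval fun v => x ⟨⟨1, by omega⟩, v⟩)) := by
  have h : (∀ j : Fin 2, ((gpair a b j).eval fun i => x ⟨j, i⟩) = true) ↔
      ((a.eval fun v => x ⟨⟨0, by omega⟩, v⟩) = true ∧
       (b.eval fun v => x ⟨⟨1, by omega⟩, v⟩) = true) := by
    rw [forall_fin2']
    exact Iff.rfl
  calc (g2 true a b).eval x
      = decide (∀ j : Fin 2, ((gpair a b j).eval fun i => x ⟨j, i⟩) = true) := rfl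
    _ = _ := by
        rw [decide_eq_decide.mpr h, Bool.decide_and]
        simp only [Bool.decide_eq_true]

lemma eval_g2_or (a b : AOF) (x : (g2 false a b).Leaf → Bool) :
    (g2 false a b).eval x
      = ((a.eval fun v => x ⟨⟨0, by omega⟩, v⟩) ||
         (b.eval fun v => x ⟨⟨1, by omega⟩, v⟩)) := by
  have h : (∃ j : Fin 2, ((gpair a b j).eval fun i => x ⟨j, i⟩) = true) ↔
      ((a.eval fun v => x ⟨⟨0, by omega⟩, v⟩) = true ∨
       (b.eval fun v => x ⟨⟨1, by omega⟩, v⟩) = true) := by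
    rw [exists_fin2']
    exact Iff.rfl
  calc (g2 false a b).eval x
      = decide (∃ j : Fin 2, ((gpair a b j).eval fun i => x ⟨j, i⟩) = true) := rfl
    _ = _ := by
        rw [decide_eq_decide.mpr h, Bool.decide_or]
        simp only [Bool.decide_eq_true]

/-! ### congruence and structural equivalences -/

lemma equivA_g2 {g : Bool} {a a' b b' : AOF} (ha : EquivA a a') (hb : EquivA b b') :
    EquivA (g2 g a b) (g2 g a' b') := by
  obtain ⟨ea, hea⟩ := ha
  obtain ⟨eb, heb⟩ := hb
  cases g
  · refine ⟨(sigmaFin2 fun j => (gpair a b j).Leaf).trans ((Equiv.sumCongr ea eb).trans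
      (sigmaFin2 fun j => (gpair a' b' j).Leaf).symm), fun x => ?_⟩
    rw [eval_g2_or, eval_g2_or,
      ← hea fun w => x ⟨⟨0, by omega⟩, w⟩, ← heb fun w => x ⟨⟨1, by omega⟩, w⟩]
    rfl
  · refine ⟨(sigmaFin2 fun j => (gpair a b j).Leaf).trans ((Equiv.sumCongr ea eb).trans
      (sigmaFin2 fun j => (gpair a' b' j).Leaf).symm), fun x => ?_⟩
    rw [eval_g2_and, eval_g2_and,
      ← hea fun w => x ⟨⟨0, by omega⟩, w⟩, ← heb fun w => x ⟨⟨1, by omega⟩, w⟩]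
    rfl

lemma equivA_unit {g : Bool} {a : AOF} (b : AOF) (ha : EquivA a (gateL g [])) :
    EquivA (g2 g a b) b := by
  obtain ⟨ea, hea⟩ := ha
  cases g
  · haveI hempty : IsEmpty a.Leaf := ⟨fun v => (ea v).1.elim0⟩
    have hconst : ∀ y : a.Leaf → Bool, a.eval y = false := by
      intro y
      have h := hea fun s => y (ea.symm s)
      simp only [Equiv.symm_apply_apply] at h
      rw [h]
      exact decide_eq_false (by rintro ⟨j, -⟩; exact j.elim0)
    haveI hempty2 : IsEmpty ((gpair a b ⟨0, by omega⟩).Leaf) := hempty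
    refine ⟨(sigmaFin2 fun j => (gpair a b j).Leaf).trans (Equiv.emptySum _ _),
      fun x => ?_⟩
    rw [eval_g2_or, hconst]
    simp only [Bool.false_or]
    rfl
  · haveI hempty : IsEmpty a.Leaf := ⟨fun v => (ea v).1.elim0⟩
    have hconst : ∀ y : a.Leaf → Bool, a.eval y = true := by
      intro y
      have h := hea fun s => y (ea.symm s)
      simp only [Equiv.symm_apply_apply] at h
      rw [h]
      exact decide_eq_true (fun j => j.elim0)
    haveI hempty2 : IsEmpty ((gpair a b ⟨0, by omega⟩).Leaf) := hempty
    refine ⟨(sigmaFin2 fun j => (gpair a b j).Leaf).trans (Equiv.emptySum _ _),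
      fun x => ?_⟩
    rw [eval_g2_and, hconst]
    simp only [Bool.true_and]
    rfl

lemma equivA_single {g : Bool} (t : AOF) : EquivA t (gateL g [t]) := by
  cases g
  · refine ⟨sigmaFin1 fun i => (([t] : List AOF).get i).Leaf, fun x => ?_⟩
    have h : (∃ i : Fin 1, (([t].get i).eval fun v => x ⟨i, v⟩) = true) ↔
        ((t.eval fun v => x ⟨⟨0, Nat.one_pos⟩, v⟩) = true) := by
      rw [exists_fin1']
      exact Iff.rfl
    have hR : (gateL false [t]).eval x
        = decide (∃ i : Fin 1, (([t].get i).eval fun v => x ⟨i, v⟩) = true) := rfl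
    rw [hR, (@decide_eq_decide _ _ _ inferInstance).mpr h, Bool.decide_eq_true]
    rfl
  · refine ⟨sigmaFin1 fun i => (([t] : List AOF).get i).Leaf, fun x => ?_⟩
    have h : (∀ i : Fin 1, (([t].get i).eval fun v => x ⟨i, v⟩) = true) ↔
        ((t.eval fun v => x ⟨⟨0, Nat.one_pos⟩, v⟩) = true) := by
      rw [forall_fin1']
      exact Iff.rfl
    have hR : (gateL true [t]).eval x
        = decide (∀ i : Fin 1, (([t].get i).eval fun v => x ⟨i, v⟩) = true) := rfl
    rw [hR, (@decide_eq_decide _ _ _ inferInstance).mpr h, Bool.decide_eq_true]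
    rfl

lemma equivA_cons {g : Bool} (t : AOF) (A : List AOF) :
    EquivA (g2 g t (gateL g A)) (gateL g (t :: A)) := by
  cases g
  · refine ⟨(sigmaFin2 _).trans
      ((sigmaFinSucc A.length fun i => ((t :: A).get i).Leaf).symm), fun x => ?_⟩
    have hR : (gateL false (t :: A)).eval x
        = decide (∃ i : Fin (A.length + 1),
            (((t :: A).get i).eval fun v => x ⟨i, v⟩) = true) := rfl
    have h : (∃ i : Fin (A.length + 1),
          (((t :: A).get i).eval fun v => x ⟨i, v⟩) = true) ↔
        ((t.eval fun v => x ⟨⟨0, Nat.succ_pos _⟩, v⟩) = true ∨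
         (∃ i : Fin A.length, ((A.get i).eval fun v => x ⟨i.succ, v⟩) = true)) := by
      rw [exists_fin_succ']
      exact Iff.rfl
    conv_rhs => rw [hR]
    rw [decide_eq_decide.mpr h, Bool.decide_or]
    simp only [Bool.decide_eq_true]
    rw [eval_g2_or]
    rfl
  · refine ⟨(sigmaFin2 _).trans
      ((sigmaFinSucc A.length fun i => ((t :: A).get i).Leaf).symm), fun x => ?_⟩
    have hR : (gateL true (t :: A)).eval x
        = decide (∀ i : Fin (A.length + 1),
            (((t :: A).get i).eval fun v => x ⟨i, v⟩) = true) := rfl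
    have h : (∀ i : Fin (A.length + 1),
          (((t :: A).get i).eval fun v => x ⟨i, v⟩) = true) ↔
        ((t.eval fun v => x ⟨⟨0, Nat.succ_pos _⟩, v⟩) = true ∧
         (∀ i : Fin A.length, ((A.get i).eval fun v => x ⟨i.succ, v⟩) = true)) := by
      rw [forall_fin_succ']
      exact Iff.rfl
    conv_rhs => rw [hR]
    rw [decide_eq_decide.mpr h, Bool.decide_and]
    simp only [Bool.decide_eq_true]
    rw [eval_g2_and]
    rfl

lemma equivA_assoc {g : Bool} (a b c : AOF) :
    EquivA (g2 g (g2 g a b) c) (g2 g a (g2 g b c)) := by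
  cases g
  · refine ⟨(sigmaFin2 fun j => (gpair (g2 false a b) c j).Leaf).trans
      ((Equiv.sumCongr (sigmaFin2 fun j => (gpair a b j).Leaf)
          (Equiv.refl ((gpair (g2 false a b) c ⟨1, by omega⟩).Leaf))).trans
        ((Equiv.sumAssoc ((gpair a b ⟨0, by omega⟩).Leaf) ((gpair a b ⟨1, by omega⟩).Leaf)
            ((gpair (g2 false a b) c ⟨1, by omega⟩).Leaf)).trans
          ((Equiv.sumCongr (Equiv.refl ((gpair a b ⟨0, by omega⟩).Leaf))
              (sigmaFin2 fun j => (gpair b c j).Leaf).symm).trans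
            (sigmaFin2 fun j => (gpair a (g2 false b c) j).Leaf).symm))), fun x => ?_⟩
    simp only [eval_g2_or]
    rw [Bool.or_assoc]
    rfl
  · refine ⟨(sigmaFin2 fun j => (gpair (g2 true a b) c j).Leaf).trans
      ((Equiv.sumCongr (sigmaFin2 fun j => (gpair a b j).Leaf)
          (Equiv.refl ((gpair (g2 true a b) c ⟨1, by omega⟩).Leaf))).trans
        ((Equiv.sumAssoc ((gpair a b ⟨0, by omega⟩).Leaf) ((gpair a b ⟨1, by omega⟩).Leaf)
            ((gpair (g2 true a b) c ⟨1, by omega⟩).Leaf)).trans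
          ((Equiv.sumCongr (Equiv.refl ((gpair a b ⟨0, by omega⟩).Leaf))
              (sigmaFin2 fun j => (gpair b c j).Leaf).symm).trans
            (sigmaFin2 fun j => (gpair a (g2 true b c) j).Leaf).symm))), fun x => ?_⟩
    simp only [eval_g2_and]
    rw [Bool.and_assoc]
    rfl

lemma equivA_append {g : Bool} (A : List AOF) : ∀ (B : List AOF) (Ta Tb : AOF),
    EquivA Ta (gateL g A) → EquivA Tb (gateL g B) →
    EquivA (g2 g Ta Tb) (gateL g (A ++ B)) := by
  induction A with
  | nil =>
      intro B Ta Tb ha hb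
      exact equivA_trans (equivA_unit Tb ha) hb
  | cons t A' ih =>
      intro B Ta Tb ha hb
      have h1 : EquivA Ta (g2 g t (gateL g A')) :=
        equivA_trans ha (equivA_symm (equivA_cons t A'))
      have h2 := equivA_g2 (g := g) h1 (equivA_refl Tb)
      have h3 := equivA_assoc (g := g) t (gateL g A') Tb
      have h4 := ih B (gateL g A') Tb (equivA_refl _) hb
      have h5 := equivA_g2 (g := g) (equivA_refl t) h4
      have h6 := equivA_cons (g := g) t (A' ++ B)
      exact equivA_trans (equivA_trans (equivA_trans h2 h3) h5) h6

theorem equivA_mkTree (g : Bool) (l : List AOF) : EquivA (mkTree g l) (gateL g l) := by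
  rw [mkTree]
  split_ifs with h2 hh hp0 hpl hl1
  · have h0 : 0 < l.length := by omega
    rw [getD_eq_get' _ _ h0]
    have hcons : l.get ⟨0, h0⟩ :: l.drop 1 = l := by
      have := (drop_eq_get_cons' (l := l) (n := 0) h0).symm
      rw [List.drop_zero] at this
      exact this
    have hm := equivA_mkTree g (l.drop 1)
    have hstep := equivA_trans (equivA_g2 (equivA_refl (l.get ⟨0, h0⟩)) hm)
      (equivA_cons _ _)
    exact equivA_trans hstep (equivA_of_eq (congrArg (gateL g) hcons))
  · have hp := (Nat.find_spec hh).1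
    rw [getD_eq_get' _ _ hp]
    have hm := equivA_mkTree g (l.take (Nat.find hh))
    have happ := equivA_append (g := g) (l.take (Nat.find hh))
      [l.get ⟨Nat.find hh, hp⟩] _ _ hm (equivA_single _)
    have hlist : l.take (Nat.find hh) ++ [l.get ⟨Nat.find hh, hp⟩] = l := by
      have hd : l.drop (Nat.find hh) = [l.get ⟨Nat.find hh, hp⟩] := by
        rw [drop_eq_get_cons' hp,
          List.drop_eq_nil_of_le (by omega : l.length ≤ Nat.find hh + 1)]
      rw [← hd]
      exact List.take_append_drop _ _
    exact equivA_trans happ (equivA_of_eq (congrArg (gateL g) hlist))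
  · have hp := (Nat.find_spec hh).1
    rw [getD_eq_get' _ _ hp]
    have hmL := equivA_mkTree g (l.take (Nat.find hh))
    have hmR := equivA_mkTree g (l.drop (Nat.find hh + 1))
    have hinner := equivA_trans (equivA_g2 (equivA_refl (l.get ⟨Nat.find hh, hp⟩)) hmR)
      (equivA_cons _ _)
    have happ := equivA_append (g := g) (l.take (Nat.find hh)) _ _ _ hmL hinner
    have hlist : l.take (Nat.find hh)
        ++ (l.get ⟨Nat.find hh, hp⟩ :: l.drop (Nat.find hh + 1)) = l := by
      rw [← drop_eq_get_cons' hp]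
      exact List.take_append_drop _ _
    exact equivA_trans happ (equivA_of_eq (congrArg (gateL g) hlist))
  · have hmL := equivA_mkTree g (l.take (Nat.find (exists_lightcut l h2 hh)))
    have hmR := equivA_mkTree g (l.drop (Nat.find (exists_lightcut l h2 hh)))
    have happ := equivA_append (g := g) _ _ _ _ hmL hmR
    exact equivA_trans happ
      (equivA_of_eq (congrArg (gateL g) (List.take_append_drop _ _)))
  · obtain ⟨t, ht⟩ := List.length_eq_one_iff.1 hl1
    subst ht
    exact equivA_single t
  · have hnil : l = [] := List.length_eq_zero_iff.1 (by omega)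
    subst hnil
    exact equivA_refl _
termination_by l.length
decreasing_by
  all_goals simp only [List.length_take, List.length_drop]
  all_goals try omega
  all_goals try (have := (Nat.find_spec hh).1; omega)
  all_goals try (have := (Nat.find_spec (exists_lightcut l h2 hh)).2.1; omega)
  all_goals try (have := (Nat.find_spec (exists_lightcut l h2 hh)).1; omega)

/-! ### gate congruence and `ofFn` -/

lemma gate_cong (g : Bool) (k : ℕ) (d c : Fin k → AOF) (h : ∀ j, EquivA (d j) (c j)) :
    EquivA (gate g k d) (gate g k c) := by
  choose e he using h
  cases g
  · refine ⟨Equiv.sigmaCongrRight e, fun x => ?_⟩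
    have hL : (gate false k d).eval (fun i => x (Equiv.sigmaCongrRight e i))
        = decide (∃ j : Fin k, ((d j).eval fun v => x ⟨j, e j v⟩) = true) := rfl
    have hR : (gate false k c).eval x
        = decide (∃ j : Fin k, ((c j).eval fun v => x ⟨j, v⟩) = true) := rfl
    refine hL.trans (Eq.trans ?_ hR.symm)
    refine decide_eq_decide.mpr (exists_congr fun j => ?_)
    have h2 : ((d j).eval fun v => x ⟨j, e j v⟩) = ((c j).eval fun v => x ⟨j, v⟩) :=
      he j fun v => x ⟨j, v⟩
    rw [h2]
  · refine ⟨Equiv.sigmaCongrRight e, fun x => ?_⟩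
    have hL : (gate true k d).eval (fun i => x (Equiv.sigmaCongrRight e i))
        = decide (∀ j : Fin k, ((d j).eval fun v => x ⟨j, e j v⟩) = true) := rfl
    have hR : (gate true k c).eval x
        = decide (∀ j : Fin k, ((c j).eval fun v => x ⟨j, v⟩) = true) := rfl
    refine hL.trans (Eq.trans ?_ hR.symm)
    refine decide_eq_decide.mpr (forall_congr' fun j => ?_)
    have h2 : ((d j).eval fun v => x ⟨j, e j v⟩) = ((c j).eval fun v => x ⟨j, v⟩) :=
      he j fun v => x ⟨j, v⟩
    rw [h2]

lemma gate_cast_equiv (g : Bool) {n k : ℕ} (hnk : n = k) (c : Fin k → AOF) :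
    EquivA (gate g n fun i => c (Fin.cast hnk i)) (gate g k c) := by
  subst hnk
  refine equivA_of_eq ?_
  have : (fun i => c (Fin.cast rfl i)) = c := funext fun i => by rw [Fin.cast_refl]; rfl
  rw [this]

lemma gateL_ofFn_equiv (g : Bool) {k : ℕ} (c d : Fin k → AOF)
    (h : ∀ j, EquivA (d j) (c j)) : EquivA (gateL g (List.ofFn d)) (gate g k c) := by
  have hlen : (List.ofFn d).length = k := List.length_ofFn (f := d)
  refine equivA_trans (equivA_trans
    (gate_cong g (List.ofFn d).length (List.ofFn d).get
      (fun i => d (Fin.cast hlen i)) (fun i => ?_))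
    (gate_cong g (List.ofFn d).length (fun i => d (Fin.cast hlen i))
      (fun i => c (Fin.cast hlen i)) (fun i => h _)))
    (gate_cast_equiv g hlen c)
  rw [List.get_ofFn]
  exact equivA_refl _

/-! ### the binarisation -/

def bin : AOF → AOF
  | .leaf => .leaf
  | .and k c => mkTree true (List.ofFn fun j => bin (c j))
  | .or k c => mkTree false (List.ofFn fun j => bin (c j))

lemma wt_ofFn {k : ℕ} (f : Fin k → AOF) : wt (List.ofFn f) = ∑ j, (f j).size := by
  simp [wt, List.map_ofFn, List.sum_ofFn, Function.comp]

lemma bin_size (φ : AOF) : (bin φ).size = φ.size := by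
  induction φ with
  | leaf => rfl
  | and k c ih =>
      show (mkTree true (List.ofFn fun j => bin (c j))).size = _
      rw [size_mkTree, wt_ofFn]
      show _ = ∑ j : Fin k, (c j).size
      exact Finset.sum_congr rfl fun j _ => ih j
  | or k c ih =>
      show (mkTree false (List.ofFn fun j => bin (c j))).size = _
      rw [size_mkTree, wt_ofFn]
      show _ = ∑ j : Fin k, (c j).size
      exact Finset.sum_congr rfl fun j _ => ih j

lemma bin_fanin (φ : AOF) : (bin φ).FanInLeTwo := by
  induction φ with
  | leaf => exact trivial
  | and k c ih =>
      show (mkTree true (List.ofFn fun j => bin (c j))).FanInLeTwo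
      refine fanin_mkTree _ _ fun t ht => ?_
      obtain ⟨j, hj⟩ := List.mem_ofFn.1 ht
      have hj' : bin (c j) = t := hj
      subst hj'
      exact ih j
  | or k c ih =>
      show (mkTree false (List.ofFn fun j => bin (c j))).FanInLeTwo
      refine fanin_mkTree _ _ fun t ht => ?_
      obtain ⟨j, hj⟩ := List.mem_ofFn.1 ht
      have hj' : bin (c j) = t := hj
      subst hj'
      exact ih j

lemma bin_equiv (φ : AOF) : EquivA (bin φ) φ := by
  induction φ with
  | leaf => exact equivA_refl _
  | and k c ih =>
      show EquivA (mkTree true (List.ofFn fun j => bin (c j))) (gate true k c)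
      exact equivA_trans (equivA_mkTree true _) (gateL_ofFn_equiv true c _ ih)
  | or k c ih =>
      show EquivA (mkTree false (List.ofFn fun j => bin (c j))) (gate false k c)
      exact equivA_trans (equivA_mkTree false _) (gateL_ofFn_equiv false c _ ih)

lemma bin_sigma (φ : AOF) (h : 1 ≤ φ.size) :
    (bin φ).sigmaMinus ≤ 33 * φ.sigmaMinus - 32 * rs φ.size := by
  induction φ with
  | leaf =>
      have h1 : (bin AOF.leaf).sigmaMinus = 1 := rfl
      have h2 : AOF.leaf.sigmaMinus = 1 := rfl
      have h3 : AOF.leaf.size = 1 := rfl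
      rw [h1, h2, h3, rs_one]
      norm_num
  | and k c ih =>
      show (mkTree true (List.ofFn fun j => bin (c j))).sigmaMinus ≤ _
      have hS : (AOF.and k c).size = ∑ j : Fin k, (c j).size := rfl
      have hwt : wt (List.ofFn fun j => bin (c j)) = (AOF.and k c).size := by
        rw [wt_ofFn, hS]
        exact Finset.sum_congr rfl fun j _ => bin_size (c j)
      have hnil : (List.ofFn fun j => bin (c j)) ≠ [] := by
        intro he
        have hlen := List.length_ofFn (f := fun j => bin (c j))
        rw [he] at hlen
        simp at hlen
        subst hlen
        rw [hS] at h
        simp at h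
      obtain ⟨t, htm, hle⟩ := sigma_mkTree true _ hnil
      obtain ⟨j, hj⟩ := List.mem_ofFn.1 htm
      have hj' : bin (c j) = t := hj
      subst hj'
      rw [hwt] at hle
      have hsup_ge : ∀ i : Fin k, (c i).sigmaMinus ≤ ⨆ i : Fin k, (c i).sigmaMinus :=
        fun i => le_ciSup (f := fun i : Fin k => (c i).sigmaMinus)
          (Set.Finite.bddAbove (Set.finite_range _)) i
      have hsig : (AOF.and k c).sigmaMinus
          = rs (AOF.and k c).size + ⨆ i : Fin k, (c i).sigmaMinus := rfl
      rcases Nat.eq_zero_or_pos (c j).size with hcz | hcp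
      · have hbz : (bin (c j)).sigmaMinus = 0 :=
          sigma_zero _ (by rw [bin_size]; exact hcz)
        rw [hbz, bin_size, hcz] at hle
        rw [Nat.max_eq_right (by omega : (0:ℕ) ≤ 1), rs_one] at hle
        have hex : ∃ i : Fin k, 1 ≤ (c i).size := by
          by_contra hc
          push_neg at hc
          have hz : ∀ i : Fin k, (c i).size = 0 := fun i => by have := hc i; omega
          rw [hS, Finset.sum_eq_zero fun i _ => hz i] at h
          omega
        obtain ⟨i0, hi0⟩ := hex
        have h1 := one_le_sigma _ hi0
        have h2 := hsup_ge i0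
        rw [hsig]
        have h3 := rs_nonneg (AOF.and k c).size
        have h4 := rs_le_one (AOF.and k c).size
        linarith
      · have hih := ih j hcp
        rw [bin_size, Nat.max_eq_left hcp] at hle
        have h2 := hsup_ge j
        rw [hsig]
        have h3 := rs_nonneg (AOF.and k c).size
        linarith
  | or k c ih =>
      show (mkTree false (List.ofFn fun j => bin (c j))).sigmaMinus ≤ _
      have hS : (AOF.or k c).size = ∑ j : Fin k, (c j).size := rfl
      have hwt : wt (List.ofFn fun j => bin (c j)) = (AOF.or k c).size := by
        rw [wt_ofFn, hS]
        exact Finset.sum_congr rfl fun j _ => bin_size (c j)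
      have hnil : (List.ofFn fun j => bin (c j)) ≠ [] := by
        intro he
        have hlen := List.length_ofFn (f := fun j => bin (c j))
        rw [he] at hlen
        simp at hlen
        subst hlen
        rw [hS] at h
        simp at h
      obtain ⟨t, htm, hle⟩ := sigma_mkTree false _ hnil
      obtain ⟨j, hj⟩ := List.mem_ofFn.1 htm
      have hj' : bin (c j) = t := hj
      subst hj'
      rw [hwt] at hle
      have hsup_ge : ∀ i : Fin k, (c i).sigmaMinus ≤ ⨆ i : Fin k, (c i).sigmaMinus :=
        fun i => le_ciSup (f := fun i : Fin k => (c i).sigmaMinus)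
          (Set.Finite.bddAbove (Set.finite_range _)) i
      have hsig : (AOF.or k c).sigmaMinus
          = rs (AOF.or k c).size + ⨆ i : Fin k, (c i).sigmaMinus := rfl
      rcases Nat.eq_zero_or_pos (c j).size with hcz | hcp
      · have hbz : (bin (c j)).sigmaMinus = 0 :=
          sigma_zero _ (by rw [bin_size]; exact hcz)
        rw [hbz, bin_size, hcz] at hle
        rw [Nat.max_eq_right (by omega : (0:ℕ) ≤ 1), rs_one] at hle
        have hex : ∃ i : Fin k, 1 ≤ (c i).size := by
          by_contra hc
          push_neg at hc
          have hz : ∀ i : Fin k, (c i).size = 0 := fun i => by have := hc i; omega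
          rw [hS, Finset.sum_eq_zero fun i _ => hz i] at h
          omega
        obtain ⟨i0, hi0⟩ := hex
        have h1 := one_le_sigma _ hi0
        have h2 := hsup_ge i0
        rw [hsig]
        have h3 := rs_nonneg (AOF.or k c).size
        have h4 := rs_le_one (AOF.or k c).size
        linarith
      · have hih := ih j hcp
        rw [bin_size, Nat.max_eq_left hcp] at hle
        have h2 := hsup_ge j
        rw [hsig]
        have h3 := rs_nonneg (AOF.or k c).size
        linarith

lemma bin_sigma_total (φ : AOF) : (bin φ).sigmaMinus ≤ 33 * φ.sigmaMinus := by
  rcases Nat.eq_zero_or_pos φ.size with h0 | h1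
  · rw [sigma_zero φ h0, sigma_zero _ (by rw [bin_size]; exact h0)]
    norm_num
  · have ha := bin_sigma φ h1
    have hb := rs_nonneg φ.size
    linarith

end Gate17

/-- there is a universal constant `C` such that every AND-OR formula
`φ` can be rewritten as an equivalent AND-OR formula `φ'` on the same variables, of the
same size, with all fan-ins at most two, and with `σ_-(φ') ≤ C·σ_-(φ)`. -/
theorem gate_expansion :
    ∃ C : ℝ, ∀ φ : AOF, ∃ (φ' : AOF) (e : φ'.Leaf ≃ φ.Leaf),
      (∀ x : φ.Leaf → Bool, φ'.eval (fun i => x (e i)) = φ.eval x) ∧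
      φ'.size = φ.size ∧
      φ'.FanInLeTwo ∧
      φ'.sigmaMinus ≤ C * φ.sigmaMinus := by
  refine ⟨33, fun φ => ?_⟩
  obtain ⟨e, he⟩ := Gate17.bin_equiv φ
  exact ⟨Gate17.bin φ, e, he, Gate17.bin_size φ, Gate17.bin_fanin φ,
    Gate17.bin_sigma_total φ⟩

end
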